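/- Let r > 0 and define c₃(t) = (r + 1/6)(1−t)³ − (1−t)/6 and c₂(t) = (1−t)²/3 − (1−t)/3 + 2(r + 1/6)·t·(1−t)². Then (c₂, c₃) is the unique solution on [0, t₂) of the system c₃′(t) = −1/3 − 3c₃(t)/(1−t), c₂′(t) = −2c₂(t)/(1−t) + (2/3)·3c₃(t)/(1−t), with initial conditions c₂(0) = 0, c₃(0) = r, where t₂ = 1 − 1/√(6r+1). -/

import Mathlib

open Real Set

private lemma hd_one_sub (t : ℝ) : HasDerivAt (fun x : ℝ => 1 - x) (-1) t := by
  simpa using (hasDerivAt_id t).const_sub 1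

private lemma hd_c3 (r t : ℝ) :
    HasDerivAt (fun x : ℝ => (r + 1 / 6) * (1 - x) ^ 3 - (1 - x) / 6)
      ((r + 1 / 6) * ((3 : ℕ) * (1 - t) ^ 2 * (-1)) - (-1) / 6) t := by
  have h3 : HasDerivAt (fun x : ℝ => (1 - x) ^ 3) ((3 : ℕ) * (1 - t) ^ 2 * (-1)) t := by
    simpa using (hd_one_sub t).fun_pow 3
  exact (h3.const_mul (r + 1 / 6)).sub ((hd_one_sub t).div_const 6)

private lemma hd_c2 (r t : ℝ) :
    HasDerivAt (fun x : ℝ => (1 - x) ^ 2 / 3 - (1 - x) / 3 + 2 * (r + 1 / 6) * x * (1 - x) ^ 2)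
      (((2 : ℕ) * (1 - t) ^ 1 * (-1)) / 3 - (-1) / 3
        + (2 * (r + 1 / 6) * (1 - t) ^ 2 + 2 * (r + 1 / 6) * t * ((2 : ℕ) * (1 - t) ^ 1 * (-1)))) t := by
  have h2 : HasDerivAt (fun x : ℝ => (1 - x) ^ 2) ((2 : ℕ) * (1 - t) ^ 1 * (-1)) t := by
    simpa using (hd_one_sub t).fun_pow 2
  have hlin : HasDerivAt (fun x : ℝ => 2 * (r + 1 / 6) * x) (2 * (r + 1 / 6)) t := by
    simpa using (hasDerivAt_id t).const_mul (2 * (r + 1 / 6))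
  exact ((h2.div_const 3).sub ((hd_one_sub t).div_const 3)).add (hlin.mul h2)

theorem ode_solution_unique (r : ℝ) (hr : 0 < r) :
    let t₂ : ℝ := 1 - 1 / Real.sqrt (6 * r + 1)
    let c₃ : ℝ → ℝ := fun t => (r + 1 / 6) * (1 - t) ^ 3 - (1 - t) / 6
    let c₂ : ℝ → ℝ := fun t =>
      (1 - t) ^ 2 / 3 - (1 - t) / 3 + 2 * (r + 1 / 6) * t * (1 - t) ^ 2
    (c₂ 0 = 0 ∧ c₃ 0 = r ∧
      (∀ t ∈ Set.Ico (0 : ℝ) t₂,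
        HasDerivAt c₃ (-(1 / 3) - 3 * c₃ t / (1 - t)) t ∧
        HasDerivAt c₂ (-(2 * c₂ t) / (1 - t) + (2 / 3) * (3 * c₃ t / (1 - t))) t)) ∧
    ∀ f g : ℝ → ℝ,
      f 0 = 0 → g 0 = r →
      (∀ t ∈ Set.Ico (0 : ℝ) t₂,
        HasDerivAt g (-(1 / 3) - 3 * g t / (1 - t)) t ∧
        HasDerivAt f (-(2 * f t) / (1 - t) + (2 / 3) * (3 * g t / (1 - t))) t) →
      ∀ t ∈ Set.Ico (0 : ℝ) t₂, f t = c₂ t ∧ g t = c₃ t := by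
  intro t₂ c₃ c₂
  -- positivity of 1 - t on the interval
  have hsq : 0 < Real.sqrt (6 * r + 1) := Real.sqrt_pos.2 (by linarith)
  have ht₂ : t₂ < 1 := by
    have : 0 < 1 / Real.sqrt (6 * r + 1) := by positivity
    simp only [t₂]; linarith
  have hpos : ∀ t ∈ Set.Ico (0 : ℝ) t₂, 0 < 1 - t := fun t ht => by
    have := ht.2; linarith
  -- derivatives of c₃ and c₂ with the target values
  have hc₃' : ∀ t ∈ Set.Ico (0 : ℝ) t₂,
      HasDerivAt c₃ (-(1 / 3) - 3 * c₃ t / (1 - t)) t := by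
    intro t ht
    have h1t := (hpos t ht).ne'
    have h := hd_c3 r t
    convert h using 1
    simp only [c₃]
    field_simp
    ring
  have hc₂' : ∀ t ∈ Set.Ico (0 : ℝ) t₂,
      HasDerivAt c₂ (-(2 * c₂ t) / (1 - t) + (2 / 3) * (3 * c₃ t / (1 - t))) t := by
    intro t ht
    have h1t := (hpos t ht).ne'
    have h := hd_c2 r t
    convert h using 1
    simp only [c₂, c₃]
    field_simp
    ring
  refine ⟨⟨by simp [c₂], by simp [c₃], fun t ht => ⟨hc₃' t ht, hc₂' t ht⟩⟩, ?_⟩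
  -- uniqueness
  intro f g hf0 hg0 hfg t ht
  have hg0' : g 0 - c₃ 0 = 0 := by simp [c₃, hg0]
  have hf0' : f 0 - c₂ 0 = 0 := by simp [c₂, hf0]
  -- step 1: g = c₃ on Icc 0 t
  have key₃ : ∀ x ∈ Set.Icc (0 : ℝ) t, g x = c₃ x := by
    set D : ℝ → ℝ := fun x => (g x - c₃ x) / (1 - x) ^ 3 with hD
    have hsub : Set.Icc (0 : ℝ) t ⊆ Set.Ico (0 : ℝ) t₂ := fun x hx =>
      ⟨hx.1, lt_of_le_of_lt hx.2 ht.2⟩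
    have hDd : ∀ x ∈ Set.Ico (0 : ℝ) t₂, HasDerivAt D 0 x := by
      intro x hx
      have h1x := (hpos x hx).ne'
      have hgx := (hfg x hx).1
      have hcx := hc₃' x hx
      have h3 : HasDerivAt (fun y : ℝ => (1 - y) ^ 3) ((3 : ℕ) * (1 - x) ^ 2 * (-1)) x := by
        simpa using (hd_one_sub x).fun_pow 3
      have hne : (1 - x) ^ 3 ≠ 0 := pow_ne_zero _ h1x
      have := (hgx.fun_sub hcx).fun_div h3 hne
      refine this.congr_deriv ?_
      field_simp
      ring
    have hcont : ContinuousOn D (Set.Icc 0 t) := fun x hx =>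
      (hDd x (hsub hx)).continuousAt.continuousWithinAt
    have hconst := constant_of_has_deriv_right_zero hcont
      (fun x hx => (hDd x (hsub ⟨hx.1, le_of_lt hx.2⟩)).hasDerivWithinAt)
    intro x hx
    have hx' := hsub hx
    have h1x := (hpos x hx').ne'
    have hD0 : D 0 = 0 := by simp [hD, hg0']
    have := hconst x hx
    rw [hD0] at this
    have hne : (1 - x) ^ 3 ≠ 0 := pow_ne_zero _ h1x
    have := div_eq_zero_iff.mp (hD ▸ this)
    rcases this with h | h
    · linarith [sub_eq_zero.mp (by linarith [h] : g x - c₃ x = 0)]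
    · exact absurd h hne
  -- step 2: f = c₂ on Icc 0 t
  have key₂ : ∀ x ∈ Set.Icc (0 : ℝ) t, f x = c₂ x := by
    set E : ℝ → ℝ := fun x => (f x - c₂ x) / (1 - x) ^ 2 with hE
    have hsub : Set.Icc (0 : ℝ) t ⊆ Set.Ico (0 : ℝ) t₂ := fun x hx =>
      ⟨hx.1, lt_of_le_of_lt hx.2 ht.2⟩
    have hEd : ∀ x ∈ Set.Icc (0 : ℝ) t, HasDerivAt E 0 x := by
      intro x hx
      have hx' := hsub hx
      have h1x := (hpos x hx').ne'
      have hfx := (hfg x hx').2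
      have hcx := hc₂' x hx'
      have hgc := key₃ x hx
      have h2 : HasDerivAt (fun y : ℝ => (1 - y) ^ 2) ((2 : ℕ) * (1 - x) ^ 1 * (-1)) x := by
        simpa using (hd_one_sub x).fun_pow 2
      have hne : (1 - x) ^ 2 ≠ 0 := pow_ne_zero _ h1x
      have := (hfx.fun_sub hcx).fun_div h2 hne
      refine this.congr_deriv ?_
      rw [hgc]
      field_simp
      ring
    have hcont : ContinuousOn E (Set.Icc 0 t) := fun x hx =>
      (hEd x hx).continuousAt.continuousWithinAt
    have hconst := constant_of_has_deriv_right_zero hcont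
      (fun x hx => (hEd x ⟨hx.1, le_of_lt hx.2⟩).hasDerivWithinAt)
    intro x hx
    have hx' := hsub hx
    have h1x := (hpos x hx').ne'
    have hE0 : E 0 = 0 := by simp [hE, hf0']
    have := hconst x hx
    rw [hE0] at this
    have hne : (1 - x) ^ 2 ≠ 0 := pow_ne_zero _ h1x
    have := div_eq_zero_iff.mp (hE ▸ this)
    rcases this with h | h
    · linarith [sub_eq_zero.mp (by linarith [h] : f x - c₂ x = 0)]
    · exact absurd h hne
  exact ⟨key₂ t ⟨ht.1, le_refl t⟩, key₃ t ⟨ht.1, le_refl t⟩⟩
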